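/- Let m ≥ 1 be an integer and r0 a real number with 0 < r0 < m. Then the function r ↦ J_{m+1/2}(r)/r^{1/2} is monotone increasing on the interval (0, r0], where J_α is the Bessel function of the first kind defined by its power series; consequently its supremum over (0, r0] equals J_{m+1/2}(r0)/r0^{1/2}. -/

import Mathlib

open Real

/-- Bessel function of the first kind, defined by its power series. -/
noncomputable def besselJ (α : ℝ) (x : ℝ) : ℝ :=
  ∑' k : ℕ,
    ((-1 : ℝ) ^ k / ((Nat.factorial k : ℝ) * Real.Gamma ((k : ℝ) + α + 1))) *
      (x / 2) ^ (2 * (k : ℝ) + α)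

namespace BesselAux


/-- coefficient of `x ^ (2k + M + 1)` in `besselJ (M + 3/2) x / x^(1/2)` -/
noncomputable def a (M : ℕ) (k : ℕ) : ℝ :=
  ((-1 : ℝ) ^ k / ((Nat.factorial k : ℝ) * Real.Gamma ((k : ℝ) + (M : ℝ) + 5 / 2))) /
    (2 : ℝ) ^ (2 * (k : ℝ) + (M : ℝ) + 3 / 2)

lemma gamma_pos (M k : ℕ) : 0 < Real.Gamma ((k : ℝ) + (M : ℝ) + 5 / 2) :=
  Real.Gamma_pos_of_pos (by positivity)

lemma gamma_ge (M k : ℕ) : Real.Gamma ((M : ℝ) + 5 / 2) ≤ Real.Gamma ((k : ℝ) + (M : ℝ) + 5 / 2) := by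
  induction k with
  | zero => simp
  | succ k ih =>
      have h1 : ((k + 1 : ℕ) : ℝ) + (M : ℝ) + 5 / 2 = ((k : ℝ) + (M : ℝ) + 5 / 2) + 1 := by
        push_cast; ring
      rw [h1, Real.Gamma_add_one (by positivity)]
      nlinarith [gamma_pos M k, ih]

lemma abs_a_le (M k : ℕ) :
    |a M k| ≤ 1 / ((Nat.factorial k : ℝ) * Real.Gamma ((M : ℝ) + 5 / 2)) := by
  have hfac : (0 : ℝ) < (Nat.factorial k : ℝ) := by positivity
  have hg0 := gamma_pos M k
  have hg := gamma_ge M k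
  have hG0 : (0 : ℝ) < Real.Gamma ((M : ℝ) + 5 / 2) := Real.Gamma_pos_of_pos (by positivity)
  have h2 : (1 : ℝ) ≤ (2 : ℝ) ^ (2 * (k : ℝ) + (M : ℝ) + 3 / 2) :=
    Real.one_le_rpow one_le_two (by positivity)
  have habs : |a M k| = 1 / ((Nat.factorial k : ℝ) * Real.Gamma ((k : ℝ) + (M : ℝ) + 5 / 2)) /
      (2 : ℝ) ^ (2 * (k : ℝ) + (M : ℝ) + 3 / 2) := by
    rw [a, abs_div, abs_div, abs_pow, abs_neg, abs_one, one_pow,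
      abs_of_pos (by positivity : (0:ℝ) < (Nat.factorial k : ℝ) * Real.Gamma ((k : ℝ) + (M : ℝ) + 5 / 2)),
      abs_of_pos (Real.rpow_pos_of_pos two_pos _)]
  rw [habs]
  calc 1 / ((Nat.factorial k : ℝ) * Real.Gamma ((k : ℝ) + (M : ℝ) + 5 / 2)) /
      (2 : ℝ) ^ (2 * (k : ℝ) + (M : ℝ) + 3 / 2)
      ≤ 1 / ((Nat.factorial k : ℝ) * Real.Gamma ((k : ℝ) + (M : ℝ) + 5 / 2)) := by
        apply div_le_self (by positivity) h2
    _ ≤ 1 / ((Nat.factorial k : ℝ) * Real.Gamma ((M : ℝ) + 5 / 2)) := by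
        apply one_div_le_one_div_of_le (by positivity)
        exact mul_le_mul_of_nonneg_left hg (le_of_lt hfac)

lemma a_rec (M k : ℕ) :
    (4 * ((k : ℝ) + 1) * ((k : ℝ) + (M : ℝ) + 5 / 2)) * a M (k + 1) = - a M k := by
  have hg0 := gamma_pos M k
  have hfac : (0 : ℝ) < (Nat.factorial k : ℝ) := by positivity
  have hGs : Real.Gamma (((k + 1 : ℕ) : ℝ) + (M : ℝ) + 5 / 2) =
      ((k : ℝ) + (M : ℝ) + 5 / 2) * Real.Gamma ((k : ℝ) + (M : ℝ) + 5 / 2) := by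
    have h1 : ((k + 1 : ℕ) : ℝ) + (M : ℝ) + 5 / 2 = ((k : ℝ) + (M : ℝ) + 5 / 2) + 1 := by
      push_cast; ring
    rw [h1, Real.Gamma_add_one (by positivity)]
  have hpow : (2 : ℝ) ^ (2 * ((k + 1 : ℕ) : ℝ) + (M : ℝ) + 3 / 2) =
      4 * (2 : ℝ) ^ (2 * (k : ℝ) + (M : ℝ) + 3 / 2) := by
    have h1 : 2 * ((k + 1 : ℕ) : ℝ) + (M : ℝ) + 3 / 2 =
        (2 : ℝ) + (2 * (k : ℝ) + (M : ℝ) + 3 / 2) := by push_cast; ring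
    rw [h1, Real.rpow_add two_pos]
    norm_num [Real.rpow_two]
  have hfacs : ((Nat.factorial (k + 1) : ℝ)) = ((k : ℝ) + 1) * (Nat.factorial k : ℝ) := by
    rw [Nat.factorial_succ]; push_cast; ring
  rw [a, a, hGs, hpow, hfacs, pow_succ]
  have h2 : (2 : ℝ) ^ (2 * (k : ℝ) + (M : ℝ) + 3 / 2) ≠ 0 :=
    ne_of_gt (Real.rpow_pos_of_pos two_pos _)
  field_simp

lemma summable_master (M : ℕ) (R : ℝ) (hR : 0 ≤ R) :
    Summable (fun k : ℕ => ((2 * k + M + 4 : ℕ) : ℝ) ^ 2 * |a M k| * R ^ (2 * k)) := by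
  have hG0 : (0 : ℝ) < Real.Gamma ((M : ℝ) + 5 / 2) := Real.Gamma_pos_of_pos (by positivity)
  have hsum : Summable (fun k : ℕ =>
      ((M : ℝ) + 4) ^ 2 / Real.Gamma ((M : ℝ) + 5 / 2) * ((4 * R ^ 2) ^ k / (Nat.factorial k : ℝ))) :=
    (Real.summable_pow_div_factorial (4 * R ^ 2)).mul_left _
  apply Summable.of_nonneg_of_le (fun k => by positivity) _ hsum
  intro k
  have hk2 : ((2 * k + M + 4 : ℕ) : ℝ) ≤ ((M : ℝ) + 4) * 2 ^ k := by
    have h1 : ((2 * k + M + 4 : ℕ) : ℝ) ≤ ((M : ℝ) + 4) * ((k : ℝ) + 1) := by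
      push_cast; nlinarith [Nat.cast_nonneg (α := ℝ) k, Nat.cast_nonneg (α := ℝ) M]
    have h2 : ((k : ℝ) + 1) ≤ (2 : ℝ) ^ k := by
      have := Nat.lt_two_pow_self (n := k)
      exact_mod_cast this
    calc ((2 * k + M + 4 : ℕ) : ℝ) ≤ ((M : ℝ) + 4) * ((k : ℝ) + 1) := h1
      _ ≤ ((M : ℝ) + 4) * 2 ^ k := by
          apply mul_le_mul_of_nonneg_left h2 (by positivity)
  have ha := abs_a_le M k
  have hfac : (0 : ℝ) < (Nat.factorial k : ℝ) := by positivity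
  calc ((2 * k + M + 4 : ℕ) : ℝ) ^ 2 * |a M k| * R ^ (2 * k)
      ≤ (((M : ℝ) + 4) * 2 ^ k) ^ 2 * (1 / ((Nat.factorial k : ℝ) * Real.Gamma ((M : ℝ) + 5 / 2)))
        * R ^ (2 * k) := by
        apply mul_le_mul_of_nonneg_right _ (by positivity)
        apply mul_le_mul (by apply pow_le_pow_left₀ (by positivity) hk2) ha (abs_nonneg _) (by positivity)
    _ = ((M : ℝ) + 4) ^ 2 / Real.Gamma ((M : ℝ) + 5 / 2) * ((4 * R ^ 2) ^ k / (Nat.factorial k : ℝ)) := by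
        have h4 : ((2 : ℝ) ^ k) ^ 2 = 4 ^ k := by
          rw [← pow_mul, mul_comm, pow_mul]; norm_num
        rw [pow_mul, mul_pow, h4]
        field_simp
        ring
lemma summable_gen (M : ℕ) (c : ℕ → ℝ)
    (hc : ∀ k, |c k| ≤ ((2 * k + M + 4 : ℕ) : ℝ) ^ 2 * |a M k|) (j : ℕ) (x : ℝ) :
    Summable (fun k : ℕ => c k * x ^ (2 * k + j)) := by
  apply Summable.of_norm
  have hb : Summable (fun k : ℕ =>
      |x| ^ j * (((2 * k + M + 4 : ℕ) : ℝ) ^ 2 * |a M k| * |x| ^ (2 * k))) :=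
    (summable_master M |x| (abs_nonneg x)).mul_left (|x| ^ j)
  apply Summable.of_nonneg_of_le (fun k => norm_nonneg _) _ hb
  intro k
  have : ‖c k * x ^ (2 * k + j)‖ = |c k| * |x| ^ (2 * k) * |x| ^ j := by
    rw [Real.norm_eq_abs, abs_mul, abs_pow, pow_add, mul_assoc]
  rw [this]
  have h2 : |c k| * |x| ^ (2 * k) ≤ ((2 * k + M + 4 : ℕ) : ℝ) ^ 2 * |a M k| * |x| ^ (2 * k) :=
    mul_le_mul_of_nonneg_right (hc k) (by positivity)
  calc |c k| * |x| ^ (2 * k) * |x| ^ j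
      ≤ ((2 * k + M + 4 : ℕ) : ℝ) ^ 2 * |a M k| * |x| ^ (2 * k) * |x| ^ j :=
        mul_le_mul_of_nonneg_right h2 (by positivity)
    _ = |x| ^ j * (((2 * k + M + 4 : ℕ) : ℝ) ^ 2 * |a M k| * |x| ^ (2 * k)) := by ring

lemma hc0 (M : ℕ) : ∀ k, |a M k| ≤ ((2 * k + M + 4 : ℕ) : ℝ) ^ 2 * |a M k| := by
  intro k
  have h1 : (1:ℝ) ≤ ((2 * k + M + 4 : ℕ) : ℝ) ^ 2 := by
    have : (1:ℝ) ≤ ((2 * k + M + 4 : ℕ) : ℝ) := by exact_mod_cast Nat.one_le_iff_ne_zero.mpr (by omega)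
    nlinarith
  nlinarith [abs_nonneg (a M k)]

lemma hc1 (M : ℕ) : ∀ k, |((2 * k + M + 1 : ℕ) : ℝ) * a M k| ≤ ((2 * k + M + 4 : ℕ) : ℝ) ^ 2 * |a M k| := by
  intro k
  rw [abs_mul, Nat.abs_cast]
  apply mul_le_mul_of_nonneg_right _ (abs_nonneg _)
  have : (2 * k + M + 1) ≤ (2 * k + M + 4) ^ 2 := by nlinarith
  exact_mod_cast this

lemma hc2 (M : ℕ) : ∀ k, |(((2 * k + M + 1) * (2 * k + M + 2) : ℕ) : ℝ) * a M k| ≤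
    ((2 * k + M + 4 : ℕ) : ℝ) ^ 2 * |a M k| := by
  intro k
  rw [abs_mul, Nat.abs_cast]
  apply mul_le_mul_of_nonneg_right _ (abs_nonneg _)
  have : ((2 * k + M + 1) * (2 * k + M + 2)) ≤ (2 * k + M + 4) ^ 2 := by nlinarith
  exact_mod_cast this
noncomputable def F (M : ℕ) (x : ℝ) : ℝ := ∑' k : ℕ, a M k * x ^ (2 * k + M + 1)
noncomputable def G (M : ℕ) (x : ℝ) : ℝ :=
  ∑' k : ℕ, ((2 * k + M + 1 : ℕ) : ℝ) * a M k * x ^ (2 * k + M)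
noncomputable def W (M : ℕ) (x : ℝ) : ℝ :=
  ∑' k : ℕ, ((2 * k + M + 1 : ℕ) : ℝ) * a M k * x ^ (2 * k + M + 2)
noncomputable def H (M : ℕ) (x : ℝ) : ℝ :=
  ∑' k : ℕ, (((2 * k + M + 1) * (2 * k + M + 2) : ℕ) : ℝ) * a M k * x ^ (2 * k + M + 1)

lemma summable_F' (M : ℕ) (x : ℝ) : Summable (fun k : ℕ => a M k * x ^ (2 * k + M + 1)) := by
  have := summable_gen M _ (hc0 M) (M + 1) x
  apply this.congr; intro k; rw [show 2 * k + (M + 1) = 2 * k + M + 1 by ring]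

lemma summable_W' (M : ℕ) (x : ℝ) :
    Summable (fun k : ℕ => ((2 * k + M + 1 : ℕ) : ℝ) * a M k * x ^ (2 * k + M + 2)) := by
  have := summable_gen M _ (hc1 M) (M + 2) x
  apply this.congr; intro k; rw [show 2 * k + (M + 2) = 2 * k + M + 2 by ring]

lemma summable_H' (M : ℕ) (x : ℝ) :
    Summable (fun k : ℕ => (((2 * k + M + 1) * (2 * k + M + 2) : ℕ) : ℝ) * a M k * x ^ (2 * k + M + 1)) := by
  have := summable_gen M _ (hc2 M) (M + 1) x
  apply this.congr; intro k; rw [show 2 * k + (M + 1) = 2 * k + M + 1 by ring]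

lemma summable_F (M : ℕ) (x : ℝ) : Summable (fun k : ℕ => a M k * x ^ (2 * k + (M + 1))) :=
  summable_gen M _ (hc0 M) (M + 1) x

lemma hasDerivAt_F (M : ℕ) (x : ℝ) : HasDerivAt (F M) (G M x) x := by
  set R : ℝ := |x| + 1 with hR
  have hRpos : (0:ℝ) < R := by positivity
  have hu : Summable (fun n : ℕ =>
      (((2 * n + M + 4 : ℕ) : ℝ) ^ 2 * |a M n| * R ^ (2 * n)) * R ^ M) :=
    (summable_master M R hRpos.le).mul_right _
  apply hasDerivAt_tsum_of_isPreconnected hu (isOpen_Ioo (a := -R) (b := R))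
    (convex_Ioo _ _).isPreconnected
    (g := fun n y => a M n * y ^ (2 * n + M + 1))
    (g' := fun n y => ((2 * n + M + 1 : ℕ) : ℝ) * a M n * y ^ (2 * n + M))
    (y₀ := 0)
  · intro n y _
    have h := (hasDerivAt_pow (2 * n + M + 1) y).const_mul (a M n)
    convert h using 1
    · rfl
    push_cast
    ring_nf
  · intro n y hy
    have hyR : |y| ≤ R := by
      rw [abs_le]; exact ⟨(Set.mem_Ioo.mp hy).1.le, (Set.mem_Ioo.mp hy).2.le⟩
    have : ‖((2 * n + M + 1 : ℕ) : ℝ) * a M n * y ^ (2 * n + M)‖ ≤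
        (((2 * n + M + 4 : ℕ) : ℝ) ^ 2 * |a M n|) * |y| ^ (2 * n + M) := by
      rw [Real.norm_eq_abs, abs_mul, abs_pow]
      exact mul_le_mul_of_nonneg_right (hc1 M n) (by positivity)
    refine this.trans ?_
    have : |y| ^ (2 * n + M) ≤ R ^ (2 * n) * R ^ M := by
      rw [← pow_add]
      exact pow_le_pow_left₀ (abs_nonneg _) hyR _
    calc (((2 * n + M + 4 : ℕ) : ℝ) ^ 2 * |a M n|) * |y| ^ (2 * n + M)
        ≤ (((2 * n + M + 4 : ℕ) : ℝ) ^ 2 * |a M n|) * (R ^ (2 * n) * R ^ M) :=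
          mul_le_mul_of_nonneg_left this (by positivity)
      _ = (((2 * n + M + 4 : ℕ) : ℝ) ^ 2 * |a M n| * R ^ (2 * n)) * R ^ M := by ring
  · exact Set.mem_Ioo.mpr ⟨by linarith, by linarith⟩
  · have := summable_F M 0
    apply this.congr
    intro k; rw [show 2 * k + (M + 1) = 2 * k + M + 1 by ring]
  · exact Set.mem_Ioo.mpr ⟨by simp [hR]; linarith [abs_nonneg x, neg_abs_le x], by simp [hR]; linarith [le_abs_self x]⟩


lemma hasDerivAt_W (M : ℕ) (x : ℝ) : HasDerivAt (W M) (H M x) x := by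
  set R : ℝ := |x| + 1 with hR
  have hRpos : (0:ℝ) < R := by positivity
  have hu : Summable (fun n : ℕ =>
      (((2 * n + M + 4 : ℕ) : ℝ) ^ 2 * |a M n| * R ^ (2 * n)) * R ^ (M + 1)) :=
    (summable_master M R hRpos.le).mul_right _
  apply hasDerivAt_tsum_of_isPreconnected hu (isOpen_Ioo (a := -R) (b := R))
    (convex_Ioo _ _).isPreconnected
    (g := fun n y => ((2 * n + M + 1 : ℕ) : ℝ) * a M n * y ^ (2 * n + M + 2))
    (g' := fun n y => (((2 * n + M + 1) * (2 * n + M + 2) : ℕ) : ℝ) * a M n * y ^ (2 * n + M + 1))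
    (y₀ := 0)
  · intro n y _
    have h := (hasDerivAt_pow (2 * n + M + 2) y).const_mul (((2 * n + M + 1 : ℕ) : ℝ) * a M n)
    convert h using 1
    · rfl
    push_cast
    ring_nf
  · intro n y hy
    have hyR : |y| ≤ R := by
      rw [abs_le]; exact ⟨(Set.mem_Ioo.mp hy).1.le, (Set.mem_Ioo.mp hy).2.le⟩
    have h1 : ‖(((2 * n + M + 1) * (2 * n + M + 2) : ℕ) : ℝ) * a M n * y ^ (2 * n + M + 1)‖ ≤
        (((2 * n + M + 4 : ℕ) : ℝ) ^ 2 * |a M n|) * |y| ^ (2 * n + M + 1) := by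
      rw [Real.norm_eq_abs, abs_mul, abs_pow]
      exact mul_le_mul_of_nonneg_right (hc2 M n) (by positivity)
    refine h1.trans ?_
    have h2 : |y| ^ (2 * n + M + 1) ≤ R ^ (2 * n) * R ^ (M + 1) := by
      rw [← pow_add, show 2 * n + (M + 1) = 2 * n + M + 1 by ring]
      exact pow_le_pow_left₀ (abs_nonneg _) hyR _
    calc (((2 * n + M + 4 : ℕ) : ℝ) ^ 2 * |a M n|) * |y| ^ (2 * n + M + 1)
        ≤ (((2 * n + M + 4 : ℕ) : ℝ) ^ 2 * |a M n|) * (R ^ (2 * n) * R ^ (M + 1)) :=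
          mul_le_mul_of_nonneg_left h2 (by positivity)
      _ = (((2 * n + M + 4 : ℕ) : ℝ) ^ 2 * |a M n| * R ^ (2 * n)) * R ^ (M + 1) := by ring
  · exact Set.mem_Ioo.mpr ⟨by linarith, by linarith⟩
  · exact summable_W' M 0
  · exact Set.mem_Ioo.mpr ⟨by linarith [abs_nonneg x, neg_abs_le x], by linarith [le_abs_self x]⟩

lemma W_eq (M : ℕ) (x : ℝ) : W M x = x ^ 2 * G M x := by
  rw [W, G, ← tsum_mul_left]
  congr 1; funext k; ring

lemma F_zero (M : ℕ) : F M 0 = 0 := by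
  rw [F]
  convert tsum_zero with k
  exact mul_eq_zero_of_right _ (zero_pow (by omega))

lemma W_zero (M : ℕ) : W M 0 = 0 := by
  rw [W]
  convert tsum_zero with k
  exact mul_eq_zero_of_right _ (zero_pow (by omega))

lemma ode (M : ℕ) (x : ℝ) :
    H M x = (((M : ℝ) + 1) * ((M : ℝ) + 2) - x ^ 2) * F M x := by
  have hsF := summable_F' M x
  have hsH := summable_H' M x
  have key : ∀ k : ℕ,
      (((2 * k + M + 1) * (2 * k + M + 2) : ℕ) : ℝ) * a M k * x ^ (2 * k + M + 1)
        - ((M : ℝ) + 1) * ((M : ℝ) + 2) * (a M k * x ^ (2 * k + M + 1)) =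
      (4 * (k : ℝ) * ((k : ℝ) + (M : ℝ) + 3 / 2)) * a M k * x ^ (2 * k + M + 1) := by
    intro k
    have : (((2 * k + M + 1) * (2 * k + M + 2) : ℕ) : ℝ) =
        ((M : ℝ) + 1) * ((M : ℝ) + 2) + 4 * (k : ℝ) * ((k : ℝ) + (M : ℝ) + 3 / 2) := by
      push_cast; ring
    rw [this]; ring
  -- sum of difference
  have hdiff : H M x - ((M : ℝ) + 1) * ((M : ℝ) + 2) * F M x =
      ∑' k : ℕ, (4 * (k : ℝ) * ((k : ℝ) + (M : ℝ) + 3 / 2)) * a M k * x ^ (2 * k + M + 1) := by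
    rw [H, F, ← tsum_mul_left, ← Summable.tsum_sub hsH (hsF.mul_left _)]
    exact tsum_congr key
  -- the difference series is summable
  have hsD : Summable (fun k : ℕ =>
      (4 * (k : ℝ) * ((k : ℝ) + (M : ℝ) + 3 / 2)) * a M k * x ^ (2 * k + M + 1)) := by
    have := hsH.sub (hsF.mul_left (((M : ℝ) + 1) * ((M : ℝ) + 2)))
    apply (this.congr _)
    intro k
    exact key k
  -- shift index: term at 0 vanishes
  have hshift : (∑' k : ℕ, (4 * (k : ℝ) * ((k : ℝ) + (M : ℝ) + 3 / 2)) * a M k * x ^ (2 * k + M + 1)) =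
      ∑' k : ℕ, (4 * ((k : ℝ) + 1) * ((k : ℝ) + 1 + (M : ℝ) + 3 / 2)) * a M (k + 1) * x ^ (2 * (k + 1) + M + 1) := by
    rw [Summable.tsum_eq_zero_add hsD]
    have h0 : 4 * ((0:ℕ) : ℝ) * (((0:ℕ):ℝ) + (M:ℝ) + 3 / 2) * a M 0 * x ^ (2 * 0 + M + 1) = 0 := by
      simp
    rw [h0, zero_add]
    apply tsum_congr
    intro k
    push_cast
    ring_nf
  -- use recurrence
  have hrec : ∀ k : ℕ,
      (4 * ((k : ℝ) + 1) * ((k : ℝ) + 1 + (M : ℝ) + 3 / 2)) * a M (k + 1) * x ^ (2 * (k + 1) + M + 1) =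
      (- a M k) * x ^ (2 * k + M + 1) * x ^ 2 := by
    intro k
    have h := a_rec M k
    have : ((k : ℝ) + 1 + (M : ℝ) + 3 / 2) = ((k : ℝ) + (M : ℝ) + 5 / 2) := by ring
    rw [this, h, show 2 * (k + 1) + M + 1 = (2 * k + M + 1) + 2 by ring, pow_add]
    ring
  have hfinal : H M x - ((M : ℝ) + 1) * ((M : ℝ) + 2) * F M x = - x ^ 2 * F M x := by
    rw [hdiff, hshift, tsum_congr hrec]
    have : ∀ k : ℕ, (- a M k) * x ^ (2 * k + M + 1) * x ^ 2 =
        (- x ^ 2) * (a M k * x ^ (2 * k + M + 1)) := by intro k; ring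
    rw [tsum_congr this, tsum_mul_left, F]
  linarith [hfinal]

lemma a0_pos (M : ℕ) : 0 < a M 0 := by
  rw [a]
  have h1 : 0 < Real.Gamma ((0 : ℕ) + (M : ℝ) + 5 / 2) := Real.Gamma_pos_of_pos (by positivity)
  have h2 : (0 : ℝ) < (2 : ℝ) ^ (2 * ((0 : ℕ) : ℝ) + (M : ℝ) + 3 / 2) :=
    Real.rpow_pos_of_pos two_pos _
  simp only [pow_zero, Nat.factorial_zero, Nat.cast_one, one_mul, Nat.cast_zero]
  rw [Nat.cast_zero] at h1 h2
  positivity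

lemma besselJ_eq (M : ℕ) (s : ℝ) (hs : 0 < s) :
    besselJ ((M : ℝ) + 1 + 1 / 2) s / s ^ ((1 : ℝ) / 2) = F M s := by
  rw [besselJ, F, ← tsum_div_const]
  apply tsum_congr
  intro k
  have hsne : s ^ ((1 : ℝ) / 2) ≠ 0 := ne_of_gt (Real.rpow_pos_of_pos hs _)
  have hGam : (k : ℝ) + ((M : ℝ) + 1 + 1 / 2) + 1 = (k : ℝ) + (M : ℝ) + 5 / 2 := by ring
  have hexp : 2 * (k : ℝ) + ((M : ℝ) + 1 + 1 / 2) = 2 * (k : ℝ) + (M : ℝ) + 3 / 2 := by ring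
  rw [hGam, hexp]
  have hdiv : (s / 2) ^ (2 * (k : ℝ) + (M : ℝ) + 3 / 2) =
      s ^ (2 * (k : ℝ) + (M : ℝ) + 3 / 2) / (2 : ℝ) ^ (2 * (k : ℝ) + (M : ℝ) + 3 / 2) :=
    Real.div_rpow hs.le (by norm_num) _
  have hsplit : s ^ (2 * (k : ℝ) + (M : ℝ) + 3 / 2) =
      s ^ ((1 : ℝ) / 2) * s ^ (2 * k + M + 1 : ℕ) := by
    have h1 : 2 * (k : ℝ) + (M : ℝ) + 3 / 2 = 1 / 2 + ((2 * k + M + 1 : ℕ) : ℝ) := by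
      push_cast; ring
    rw [h1, Real.rpow_add hs, Real.rpow_natCast]
  rw [hdiv, hsplit, a]
  field_simp

noncomputable def Ctail (M : ℕ) : ℝ := ∑' k : ℕ, ((2 * (k + 1) + M + 1 : ℕ) : ℝ) * |a M (k + 1)|

lemma summable_abs_coef (M : ℕ) : Summable (fun k : ℕ => ((2 * k + M + 1 : ℕ) : ℝ) * |a M k|) := by
  have hb : ∀ k, |(((2 * k + M + 1 : ℕ) : ℝ) * |a M k| : ℝ)| ≤ ((2 * k + M + 4 : ℕ) : ℝ) ^ 2 * |a M k| := by
    intro k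
    have h := hc1 M k
    rw [abs_mul, Nat.abs_cast, abs_abs]
    rw [abs_mul, Nat.abs_cast] at h
    exact h
  have h := summable_gen M (fun k => ((2 * k + M + 1 : ℕ) : ℝ) * |a M k|) hb 0 1
  apply h.congr
  intro k; simp

lemma summable_Ctail (M : ℕ) : Summable (fun k : ℕ => ((2 * (k + 1) + M + 1 : ℕ) : ℝ) * |a M (k + 1)|) := by
  have h := (summable_nat_add_iff (f := fun k : ℕ => ((2 * k + M + 1 : ℕ) : ℝ) * |a M k|) 1).mpr
    (summable_abs_coef M)
  exact h

lemma Ctail_nonneg (M : ℕ) : 0 ≤ Ctail M :=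
  tsum_nonneg fun k => by positivity

set_option maxHeartbeats 1000000 in
lemma W_lower (M : ℕ) (x : ℝ) (hx : 0 < x) (hx1 : x ≤ 1) :
    ((M : ℝ) + 1) * a M 0 * x ^ (M + 2) - Ctail M * x ^ (M + 4) ≤ W M x := by
  have hsW := summable_W' M x
  have hsplit := Summable.tsum_eq_zero_add hsW
  have h0 : ((2 * 0 + M + 1 : ℕ) : ℝ) * a M 0 * x ^ (2 * 0 + M + 2) =
      ((M : ℝ) + 1) * a M 0 * x ^ (M + 2) := by
    norm_num
  have htail_s : Summable (fun k : ℕ =>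
      ((2 * (k + 1) + M + 1 : ℕ) : ℝ) * a M (k + 1) * x ^ (2 * (k + 1) + M + 2)) := by
    have h := (summable_nat_add_iff
      (f := fun k : ℕ => ((2 * k + M + 1 : ℕ) : ℝ) * a M k * x ^ (2 * k + M + 2)) 1).mpr hsW
    exact h
  have habs : |∑' k : ℕ, ((2 * (k + 1) + M + 1 : ℕ) : ℝ) * a M (k + 1) * x ^ (2 * (k + 1) + M + 2)| ≤
      Ctail M * x ^ (M + 4) := by
    have h1 : |∑' k : ℕ, ((2 * (k + 1) + M + 1 : ℕ) : ℝ) * a M (k + 1) * x ^ (2 * (k + 1) + M + 2)| ≤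
        ∑' k : ℕ, |((2 * (k + 1) + M + 1 : ℕ) : ℝ) * a M (k + 1) * x ^ (2 * (k + 1) + M + 2)| := by
      have := norm_tsum_le_tsum_norm (f := fun k : ℕ =>
        ((2 * (k + 1) + M + 1 : ℕ) : ℝ) * a M (k + 1) * x ^ (2 * (k + 1) + M + 2)) (by
          simpa only [Real.norm_eq_abs] using htail_s.abs)
      simpa only [Real.norm_eq_abs] using this
    refine h1.trans ?_
    rw [show Ctail M * x ^ (M + 4) = ∑' k : ℕ, ((2 * (k + 1) + M + 1 : ℕ) : ℝ) * |a M (k + 1)| * x ^ (M + 4) by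
      rw [Ctail, ← tsum_mul_right]]
    apply Summable.tsum_le_tsum _ (htail_s.abs) ((summable_Ctail M).mul_right _)
    intro k
    rw [abs_mul, abs_mul, Nat.abs_cast, abs_pow, abs_of_pos hx, mul_assoc, mul_assoc]
    apply mul_le_mul_of_nonneg_left _ (by positivity)
    apply mul_le_mul_of_nonneg_left _ (abs_nonneg _)
    exact pow_le_pow_of_le_one hx.le hx1 (by omega)
  have := neg_abs_le (∑' k : ℕ, ((2 * (k + 1) + M + 1 : ℕ) : ℝ) * a M (k + 1) * x ^ (2 * (k + 1) + M + 2))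
  rw [W, hsplit, h0]
  linarith
lemma contF (M : ℕ) : Continuous (F M) :=
  continuous_iff_continuousAt.mpr fun x => (hasDerivAt_F M x).differentiableAt.continuousAt

lemma contW (M : ℕ) : Continuous (W M) :=
  continuous_iff_continuousAt.mpr fun x => (hasDerivAt_W M x).differentiableAt.continuousAt

lemma W_pos_near_zero (M : ℕ) : ∃ δ > 0, ∀ x : ℝ, 0 < x → x < δ → 0 < W M x := by
  set A : ℝ := ((M : ℝ) + 1) * a M 0 with hA
  have hApos : 0 < A := by
    have := a0_pos M
    positivity
  set C : ℝ := Ctail M with hC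
  have hC0 := Ctail_nonneg M
  refine ⟨min 1 (Real.sqrt (A / (C + 1))), lt_min one_pos (Real.sqrt_pos.mpr (by positivity)), ?_⟩
  intro x hx hxδ
  have hx1 : x ≤ 1 := le_of_lt (lt_of_lt_of_le hxδ (min_le_left _ _))
  have hxs : x < Real.sqrt (A / (C + 1)) := lt_of_lt_of_le hxδ (min_le_right _ _)
  have hx2 : x ^ 2 < A / (C + 1) := by
    have := Real.sq_sqrt (le_of_lt (show (0:ℝ) < A / (C + 1) by positivity))
    nlinarith [Real.sqrt_nonneg (A / (C + 1))]
  have hlow := W_lower M x hx hx1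
  have hsplit : x ^ (M + 4) = x ^ (M + 2) * x ^ 2 := by
    rw [← pow_add]
  have hCx : C * x ^ (M + 4) ≤ (C + 1) * x ^ 2 * x ^ (M + 2) := by
    rw [hsplit]
    nlinarith [pow_pos hx (M + 2), pow_pos hx 2]
  have hfin : (C + 1) * x ^ 2 < A := by
    have h1 : (C + 1) * x ^ 2 < (C + 1) * (A / (C + 1)) :=
      mul_lt_mul_of_pos_left hx2 (by positivity)
    rwa [mul_div_cancel₀ A (by positivity : (C + 1) ≠ 0)] at h1
  have : 0 < (A - (C + 1) * x ^ 2) * x ^ (M + 2) := by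
    apply mul_pos (by linarith) (pow_pos hx _)
  nlinarith [hlow]

lemma F_strictMonoOn_aux (M : ℕ) (b : ℝ) (hb : 0 < b)
    (hW : ∀ x : ℝ, 0 < x → x < b → 0 < W M x) : StrictMonoOn (F M) (Set.Icc 0 b) := by
  apply strictMonoOn_of_deriv_pos (convex_Icc 0 b) (contF M).continuousOn
  intro x hx
  rw [interior_Icc] at hx
  rw [(hasDerivAt_F M x).deriv]
  have hWx := hW x hx.1 hx.2
  have heq := W_eq M x
  nlinarith [pow_pos hx.1 2]

lemma W_pos (M : ℕ) (r0 : ℝ) (hr0 : 0 < r0) (hr0m : r0 < (M : ℝ) + 1) :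
    ∀ r ∈ Set.Ioc (0 : ℝ) r0, 0 < W M r := by
  by_contra hcon
  push_neg at hcon
  obtain ⟨r, hrIoc, hWr⟩ := hcon
  obtain ⟨δ, hδ0, hδpos⟩ := W_pos_near_zero M
  have hδr : δ ≤ r := by
    by_contra hlt
    push_neg at hlt
    exact absurd (hδpos r hrIoc.1 hlt) (not_lt.mpr hWr)
  set B : Set ℝ := Set.Icc δ r0 ∩ {x : ℝ | W M x ≤ 0} with hB
  have hBne : B.Nonempty := ⟨r, ⟨hδr, hrIoc.2⟩, hWr⟩
  have hBclosed : IsClosed B := isClosed_Icc.inter (isClosed_le (contW M) continuous_const)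
  have hBbdd : BddBelow B := (BddBelow.mono (Set.inter_subset_left) bddBelow_Icc)
  set r₁ : ℝ := sInf B with hr₁def
  have hr₁mem : r₁ ∈ B := hBclosed.csInf_mem hBne hBbdd
  have hδr₁ : δ ≤ r₁ := hr₁mem.1.1
  have hr₁r0 : r₁ ≤ r0 := hr₁mem.1.2
  have hr₁pos : 0 < r₁ := lt_of_lt_of_le hδ0 hδr₁
  have hWr₁ : W M r₁ ≤ 0 := hr₁mem.2
  have hpos_below : ∀ x : ℝ, 0 < x → x < r₁ → 0 < W M x := by
    intro x hx hxr₁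
    by_cases hxδ : x < δ
    · exact hδpos x hx hxδ
    · push_neg at hxδ
      by_contra hWx
      push_neg at hWx
      have hxB : x ∈ B := ⟨⟨hxδ, le_trans hxr₁.le hr₁r0⟩, hWx⟩
      exact absurd (csInf_le hBbdd hxB) (not_le.mpr hxr₁)
  have hFs := F_strictMonoOn_aux M r₁ hr₁pos hpos_below
  have hFpos : ∀ x : ℝ, 0 < x → x ≤ r₁ → 0 < F M x := by
    intro x hx hxr
    have h := hFs (Set.mem_Icc.mpr ⟨le_rfl, hr₁pos.le⟩) (Set.mem_Icc.mpr ⟨hx.le, hxr⟩) hx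
    rwa [F_zero M] at h
  have hWs : StrictMonoOn (W M) (Set.Icc 0 r₁) := by
    apply strictMonoOn_of_deriv_pos (convex_Icc 0 r₁) (contW M).continuousOn
    intro x hx
    rw [interior_Icc] at hx
    rw [(hasDerivAt_W M x).deriv, ode]
    apply mul_pos _ (hFpos x hx.1 hx.2.le)
    have hxr0 : x < r0 := lt_of_lt_of_le hx.2 hr₁r0
    nlinarith [hx.1, hxr0, hr0m, hr0]
  have hlt : W M 0 < W M r₁ :=
    hWs (Set.mem_Icc.mpr ⟨le_rfl, hr₁pos.le⟩) (Set.mem_Icc.mpr ⟨hr₁pos.le, le_rfl⟩) hr₁pos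
  rw [W_zero M] at hlt
  linarith

lemma F_strictMonoOn (M : ℕ) (r0 : ℝ) (hr0 : 0 < r0) (hr0m : r0 < (M : ℝ) + 1) :
    StrictMonoOn (F M) (Set.Icc 0 r0) := by
  apply F_strictMonoOn_aux M r0 hr0
  intro x hx hxr0
  exact W_pos M r0 hr0 hr0m x ⟨hx, hxr0.le⟩


end BesselAux

open BesselAux in
theorem besselJ_div_sqrt_monotoneOn (m : ℕ) (hm : 1 ≤ m) (r0 : ℝ) (hr0 : 0 < r0)
    (hr0m : r0 < (m : ℝ)) :
    MonotoneOn (fun s : ℝ => besselJ ((m : ℝ) + 1 / 2) s / s ^ ((1 : ℝ) / 2))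
      (Set.Ioc 0 r0) ∧
    sSup ((fun s : ℝ => besselJ ((m : ℝ) + 1 / 2) s / s ^ ((1 : ℝ) / 2)) '' Set.Ioc 0 r0) =
      besselJ ((m : ℝ) + 1 / 2) r0 / r0 ^ ((1 : ℝ) / 2) := by
  obtain ⟨M, rfl⟩ : ∃ M, m = M + 1 := ⟨m - 1, by omega⟩
  have hcast : ((M + 1 : ℕ) : ℝ) = (M : ℝ) + 1 := by push_cast; ring
  have heq : ∀ s ∈ Set.Ioc (0 : ℝ) r0,
      besselJ (((M + 1 : ℕ) : ℝ) + 1 / 2) s / s ^ ((1 : ℝ) / 2) = F M s := by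
    intro s hs
    rw [hcast]
    exact besselJ_eq M s hs.1
  have hr0m' : r0 < (M : ℝ) + 1 := by rwa [hcast] at hr0m
  have hstrict := F_strictMonoOn M r0 hr0 hr0m'
  have hmono : MonotoneOn (fun s : ℝ => besselJ (((M + 1 : ℕ) : ℝ) + 1 / 2) s / s ^ ((1 : ℝ) / 2))
      (Set.Ioc 0 r0) := by
    intro x hx y hy hxy
    simp only
    rw [heq x hx, heq y hy]
    exact hstrict.monotoneOn ⟨hx.1.le, hx.2⟩ ⟨hy.1.le, hy.2⟩ hxy
  refine ⟨hmono, ?_⟩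
  apply IsGreatest.csSup_eq
  constructor
  · exact ⟨r0, ⟨hr0, le_rfl⟩, rfl⟩
  · rintro z ⟨x, hx, rfl⟩
    exact hmono hx ⟨hr0, le_rfl⟩ hx.2
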